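/- Let $a_1, a_2$ be real numbers with $a_1^2 \ne a_2^2$ and $a_1, a_2 \ne 0$, and let $f : \mathbb{R} \to \mathbb{R}$ be continuous. Define $u(t) = \int_0^t \int_0^{t-\tau}(t - \tau - \tau') \Big(\frac{a_1^2}{a_1^2-a_2^2}\,\frac{\sinh(a_1\tau')}{a_1} + \frac{a_2^2}{a_2^2-a_1^2}\,\frac{\sinh(a_2\tau')}{a_2}\Big) f(\tau)\, d\tau'\, d\tau$. Then $u$ is four times continuously differentiable, $u^{(4)}(t) - (a_1^2 + a_2^2) u''(t) + a_1^2 a_2^2 u(t) = f(t)$ for all $t$, and $u(0) = u'(0) = u''(0) = u'''(0) = 0$. -/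

import Mathlib

open Real intervalIntegral

private lemma ftc14 (g : ℝ → ℝ) (hg : Continuous g) (t : ℝ) :
    HasDerivAt (fun t => ∫ τ in (0:ℝ)..t, g τ) (g t) t :=
  intervalIntegral.integral_hasDerivAt_right (hg.intervalIntegrable _ _)
    (hg.stronglyMeasurableAtFilter _ _) hg.continuousAt

noncomputable def Wf14 (a : ℝ) (f : ℝ → ℝ) (t : ℝ) : ℝ :=
  Real.sinh (a*t) * (∫ τ in (0:ℝ)..t, Real.cosh (a*τ) * f τ)
  - Real.cosh (a*t) * (∫ τ in (0:ℝ)..t, Real.sinh (a*τ) * f τ)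

noncomputable def Wg14 (a : ℝ) (f : ℝ → ℝ) (t : ℝ) : ℝ :=
  a * (Real.cosh (a*t) * (∫ τ in (0:ℝ)..t, Real.cosh (a*τ) * f τ)
  - Real.sinh (a*t) * (∫ τ in (0:ℝ)..t, Real.sinh (a*τ) * f τ))

private lemma hasDerivAt_Wf14 (a : ℝ) (f : ℝ → ℝ) (hf : Continuous f) (t : ℝ) :
    HasDerivAt (Wf14 a f) (Wg14 a f t) t := by
  have hs : HasDerivAt (fun t => Real.sinh (a*t)) (a * Real.cosh (a*t)) t := by
    simpa [mul_comm] using ((hasDerivAt_id t).const_mul a).sinh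
  have hc : HasDerivAt (fun t => Real.cosh (a*t)) (a * Real.sinh (a*t)) t := by
    simpa [mul_comm] using ((hasDerivAt_id t).const_mul a).cosh
  have hC := ftc14 (fun τ => Real.cosh (a*τ) * f τ) (by fun_prop) t
  have hS := ftc14 (fun τ => Real.sinh (a*τ) * f τ) (by fun_prop) t
  have := (hs.mul hC).sub (hc.mul hS)
  refine HasDerivAt.congr_deriv this (Eq.symm ?_)
  simp only [Wg14]
  ring

private lemma hasDerivAt_Wg14 (a : ℝ) (f : ℝ → ℝ) (hf : Continuous f) (t : ℝ) :
    HasDerivAt (Wg14 a f) (a^2 * Wf14 a f t + a * f t) t := by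
  have hs : HasDerivAt (fun t => Real.sinh (a*t)) (a * Real.cosh (a*t)) t := by
    simpa [mul_comm] using ((hasDerivAt_id t).const_mul a).sinh
  have hc : HasDerivAt (fun t => Real.cosh (a*t)) (a * Real.sinh (a*t)) t := by
    simpa [mul_comm] using ((hasDerivAt_id t).const_mul a).cosh
  have hC := ftc14 (fun τ => Real.cosh (a*τ) * f τ) (by fun_prop) t
  have hS := ftc14 (fun τ => Real.sinh (a*τ) * f τ) (by fun_prop) t
  have := (((hc.mul hC).sub (hs.mul hS)).const_mul a)
  refine HasDerivAt.congr_deriv this (Eq.symm ?_)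
  have h := Real.cosh_sq (a*t)
  simp only [Wf14]
  linear_combination (-(a * f t)) * h

private lemma cont_Wf14 (a : ℝ) (f : ℝ → ℝ) (hf : Continuous f) : Continuous (Wf14 a f) :=
  Differentiable.continuous fun t => (hasDerivAt_Wf14 a f hf t).differentiableAt

private lemma cont_Wg14 (a : ℝ) (f : ℝ → ℝ) (hf : Continuous f) : Continuous (Wg14 a f) :=
  Differentiable.continuous fun t => (hasDerivAt_Wg14 a f hf t).differentiableAt

private lemma Wf14_zero (a : ℝ) (f : ℝ → ℝ) : Wf14 a f 0 = 0 := by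
  simp [Wf14]

private lemma Wg14_zero (a : ℝ) (f : ℝ → ℝ) : Wg14 a f 0 = 0 := by
  simp [Wg14]

private lemma term14 (a s : ℝ) (ha : a ≠ 0) (x : ℝ) :
    HasDerivAt (fun x => (s-x)*Real.cosh (a*x)/a + Real.sinh (a*x)/a^2)
      ((s-x)*Real.sinh (a*x)) x := by
  have hs : HasDerivAt (fun x => Real.sinh (a*x)) (a * Real.cosh (a*x)) x := by
    simpa [mul_comm] using ((hasDerivAt_id x).const_mul a).sinh
  have hc : HasDerivAt (fun x => Real.cosh (a*x)) (a * Real.sinh (a*x)) x := by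
    simpa [mul_comm] using ((hasDerivAt_id x).const_mul a).cosh
  have hsx : HasDerivAt (fun x => s - x) (-1) x := by
    simpa using (hasDerivAt_id x).const_sub s
  have := ((hsx.mul hc).div_const a).add (hs.div_const (a^2))
  refine HasDerivAt.congr_deriv this (Eq.symm ?_)
  field_simp
  ring

private lemma inner14 (a₁ a₂ : ℝ) (h₁ : a₁ ≠ 0) (h₂ : a₂ ≠ 0) (hA : a₁^2 - a₂^2 ≠ 0) (s : ℝ) :
    (∫ x in (0:ℝ)..s, (s - x) * (a₁ ^ 2 / (a₁ ^ 2 - a₂ ^ 2) * (Real.sinh (a₁ * x) / a₁) +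
        a₂ ^ 2 / (a₂ ^ 2 - a₁ ^ 2) * (Real.sinh (a₂ * x) / a₂)))
      = Real.sinh (a₁*s)/(a₁*(a₁^2-a₂^2)) + Real.sinh (a₂*s)/(a₂*(a₂^2-a₁^2)) := by
  have hA' : a₂^2 - a₁^2 ≠ 0 := by intro h; apply hA; linarith [sub_eq_zero.mp h]
  set c₁ := a₁ ^ 2 / (a₁ ^ 2 - a₂ ^ 2)
  set c₂ := a₂ ^ 2 / (a₂ ^ 2 - a₁ ^ 2)
  have key : ∀ x ∈ Set.uIcc (0:ℝ) s,
      HasDerivAt (fun x => c₁/a₁ * ((s-x)*Real.cosh (a₁*x)/a₁ + Real.sinh (a₁*x)/a₁^2)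
        + c₂/a₂ * ((s-x)*Real.cosh (a₂*x)/a₂ + Real.sinh (a₂*x)/a₂^2))
        ((s - x) * (c₁ * (Real.sinh (a₁ * x) / a₁) + c₂ * (Real.sinh (a₂ * x) / a₂))) x := by
    intro x _
    have := ((term14 a₁ s h₁ x).const_mul (c₁/a₁)).add ((term14 a₂ s h₂ x).const_mul (c₂/a₂))
    refine HasDerivAt.congr_deriv this (Eq.symm ?_)
    field_simp
  have hint : IntervalIntegrable (fun x => (s - x) * (c₁ * (Real.sinh (a₁ * x) / a₁) +
      c₂ * (Real.sinh (a₂ * x) / a₂))) MeasureTheory.volume 0 s := by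
    apply Continuous.intervalIntegrable; fun_prop
  rw [intervalIntegral.integral_eq_sub_of_hasDerivAt key hint]
  simp only [c₁, c₂, mul_zero, Real.sinh_zero, Real.cosh_zero]
  field_simp
  ring

theorem stmt14 (a₁ a₂ : ℝ) (hne : a₁ ^ 2 ≠ a₂ ^ 2) (h₁ : a₁ ≠ 0) (h₂ : a₂ ≠ 0)
    (f : ℝ → ℝ) (hf : Continuous f) (u : ℝ → ℝ)
    (hu : ∀ t, u t = ∫ τ in (0 : ℝ)..t, ∫ τ' in (0 : ℝ)..(t - τ),
      (t - τ - τ') * (a₁ ^ 2 / (a₁ ^ 2 - a₂ ^ 2) * (Real.sinh (a₁ * τ') / a₁) +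
        a₂ ^ 2 / (a₂ ^ 2 - a₁ ^ 2) * (Real.sinh (a₂ * τ') / a₂)) * f τ) :
    ContDiff ℝ 4 u ∧
      (∀ t, iteratedDeriv 4 u t - (a₁ ^ 2 + a₂ ^ 2) * iteratedDeriv 2 u t +
        a₁ ^ 2 * a₂ ^ 2 * u t = f t) ∧
      u 0 = 0 ∧ deriv u 0 = 0 ∧ iteratedDeriv 2 u 0 = 0 ∧ iteratedDeriv 3 u 0 = 0 := by
  have hA : a₁^2 - a₂^2 ≠ 0 := sub_ne_zero.mpr hne
  have hA' : a₂^2 - a₁^2 ≠ 0 := by intro h; apply hA; linarith [sub_eq_zero.mp h]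
  set b₁ : ℝ := 1/(a₁*(a₁^2-a₂^2)) with hb₁
  set b₂ : ℝ := 1/(a₂*(a₂^2-a₁^2)) with hb₂
  -- Step 1: closed form for u
  have huW : ∀ t, u t = b₁ * Wf14 a₁ f t + b₂ * Wf14 a₂ f t := by
    intro t
    rw [hu t]
    have step1 : (∫ τ in (0 : ℝ)..t, ∫ τ' in (0 : ℝ)..(t - τ),
        (t - τ - τ') * (a₁ ^ 2 / (a₁ ^ 2 - a₂ ^ 2) * (Real.sinh (a₁ * τ') / a₁) +
          a₂ ^ 2 / (a₂ ^ 2 - a₁ ^ 2) * (Real.sinh (a₂ * τ') / a₂)) * f τ)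
        = ∫ τ in (0 : ℝ)..t,
          (Real.sinh (a₁*(t-τ))/(a₁*(a₁^2-a₂^2)) + Real.sinh (a₂*(t-τ))/(a₂*(a₂^2-a₁^2))) * f τ := by
      apply intervalIntegral.integral_congr
      intro τ _
      simp only
      rw [intervalIntegral.integral_mul_const, inner14 a₁ a₂ h₁ h₂ hA (t-τ)]
    rw [step1]
    have e1 : b₁ * Wf14 a₁ f t = ∫ τ in (0:ℝ)..t,
        ((b₁*Real.sinh (a₁*t)) * (Real.cosh (a₁*τ)*f τ)
          - (b₁*Real.cosh (a₁*t)) * (Real.sinh (a₁*τ)*f τ)) := by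
      rw [intervalIntegral.integral_sub
        (by apply Continuous.intervalIntegrable; fun_prop)
        (by apply Continuous.intervalIntegrable; fun_prop),
        intervalIntegral.integral_const_mul, intervalIntegral.integral_const_mul]
      simp only [Wf14]; ring
    have e2 : b₂ * Wf14 a₂ f t = ∫ τ in (0:ℝ)..t,
        ((b₂*Real.sinh (a₂*t)) * (Real.cosh (a₂*τ)*f τ)
          - (b₂*Real.cosh (a₂*t)) * (Real.sinh (a₂*τ)*f τ)) := by
      rw [intervalIntegral.integral_sub
        (by apply Continuous.intervalIntegrable; fun_prop)
        (by apply Continuous.intervalIntegrable; fun_prop),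
        intervalIntegral.integral_const_mul, intervalIntegral.integral_const_mul]
      simp only [Wf14]; ring
    rw [e1, e2, ← intervalIntegral.integral_add
      (by apply Continuous.intervalIntegrable; fun_prop)
      (by apply Continuous.intervalIntegrable; fun_prop)]
    apply intervalIntegral.integral_congr
    intro τ _
    simp only
    have s1 : Real.sinh (a₁*(t-τ)) = Real.sinh (a₁*t) * Real.cosh (a₁*τ)
        - Real.cosh (a₁*t) * Real.sinh (a₁*τ) := by
      rw [mul_sub, Real.sinh_sub]
    have s2 : Real.sinh (a₂*(t-τ)) = Real.sinh (a₂*t) * Real.cosh (a₂*τ)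
        - Real.cosh (a₂*t) * Real.sinh (a₂*τ) := by
      rw [mul_sub, Real.sinh_sub]
    rw [s1, s2, hb₁, hb₂]
    field_simp
  have hufun : u = fun t => b₁ * Wf14 a₁ f t + b₂ * Wf14 a₂ f t := funext huW
  -- derivative chain
  set v₁ : ℝ → ℝ := fun t => b₁ * Wg14 a₁ f t + b₂ * Wg14 a₂ f t with hv₁
  set v₂ : ℝ → ℝ := fun t => b₁ * a₁^2 * Wf14 a₁ f t + b₂ * a₂^2 * Wf14 a₂ f t with hv₂
  set v₃ : ℝ → ℝ := fun t => b₁ * a₁^2 * Wg14 a₁ f t + b₂ * a₂^2 * Wg14 a₂ f t with hv₃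
  set v₄ : ℝ → ℝ := fun t => b₁ * a₁^2 * (a₁^2 * Wf14 a₁ f t + a₁ * f t)
      + b₂ * a₂^2 * (a₂^2 * Wf14 a₂ f t + a₂ * f t) with hv₄
  have hb0 : b₁ * a₁ + b₂ * a₂ = 0 := by
    rw [hb₁, hb₂]; field_simp; ring
  have hd0 : ∀ t, HasDerivAt u (v₁ t) t := by
    intro t
    rw [hufun]
    exact ((hasDerivAt_Wf14 a₁ f hf t).const_mul b₁).add ((hasDerivAt_Wf14 a₂ f hf t).const_mul b₂)
  have hd1 : ∀ t, HasDerivAt v₁ (v₂ t) t := by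
    intro t
    have := ((hasDerivAt_Wg14 a₁ f hf t).const_mul b₁).add ((hasDerivAt_Wg14 a₂ f hf t).const_mul b₂)
    refine HasDerivAt.congr_deriv this (Eq.symm ?_)
    simp only [hv₂]
    linear_combination (-(f t)) * hb0
  have hd2 : ∀ t, HasDerivAt v₂ (v₃ t) t := by
    intro t
    exact ((hasDerivAt_Wf14 a₁ f hf t).const_mul (b₁ * a₁^2)).add
      ((hasDerivAt_Wf14 a₂ f hf t).const_mul (b₂ * a₂^2))
  have hd3 : ∀ t, HasDerivAt v₃ (v₄ t) t := by
    intro t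
    exact ((hasDerivAt_Wg14 a₁ f hf t).const_mul (b₁ * a₁^2)).add
      ((hasDerivAt_Wg14 a₂ f hf t).const_mul (b₂ * a₂^2))
  have hD0 : deriv u = v₁ := funext fun t => (hd0 t).deriv
  have hD1 : deriv v₁ = v₂ := funext fun t => (hd1 t).deriv
  have hD2 : deriv v₂ = v₃ := funext fun t => (hd2 t).deriv
  have hD3 : deriv v₃ = v₄ := funext fun t => (hd3 t).deriv
  have hI2 : iteratedDeriv 2 u = v₂ := by
    rw [show (2:ℕ) = 1 + 1 from rfl, iteratedDeriv_succ, iteratedDeriv_one, hD0, hD1]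
  have hI3 : iteratedDeriv 3 u = v₃ := by
    rw [show (3:ℕ) = 2 + 1 from rfl, iteratedDeriv_succ, hI2, hD2]
  have hI4 : iteratedDeriv 4 u = v₄ := by
    rw [show (4:ℕ) = 3 + 1 from rfl, iteratedDeriv_succ, hI3, hD3]
  refine ⟨?_, ?_, ?_, ?_, ?_, ?_⟩
  · -- ContDiff
    rw [show (4 : WithTop ℕ∞) = 3 + 1 from rfl, contDiff_succ_iff_deriv]
    refine ⟨fun t => (hd0 t).differentiableAt, by simp, ?_⟩
    rw [hD0, show (3 : WithTop ℕ∞) = 2 + 1 from rfl, contDiff_succ_iff_deriv]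
    refine ⟨fun t => (hd1 t).differentiableAt, by simp, ?_⟩
    rw [hD1, show (2 : WithTop ℕ∞) = 1 + 1 from rfl, contDiff_succ_iff_deriv]
    refine ⟨fun t => (hd2 t).differentiableAt, by simp, ?_⟩
    rw [hD2, show (1 : WithTop ℕ∞) = 0 + 1 from rfl, contDiff_succ_iff_deriv]
    refine ⟨fun t => (hd3 t).differentiableAt, by simp, ?_⟩
    rw [hD3]
    refine contDiff_zero.mpr ?_
    simp only [hv₄]
    exact (continuous_const.mul ((continuous_const.mul (cont_Wf14 a₁ f hf)).add
        (continuous_const.mul hf))).add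
      (continuous_const.mul ((continuous_const.mul (cont_Wf14 a₂ f hf)).add
        (continuous_const.mul hf)))
  · -- ODE
    intro t
    rw [hI4, hI2, huW t]
    simp only [hv₄, hv₂, hb₁, hb₂]
    field_simp
    ring
  · rw [huW 0]; simp [Wf14_zero]
  · rw [hD0]; simp only [hv₁]; simp [Wg14_zero]
  · rw [hI2]; simp only [hv₂]; simp [Wf14_zero]
  · rw [hI3]; simp only [hv₃]; simp [Wg14_zero]
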